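/- Let (λ₁,…,λ_m) be positive reals, m ≥ 2, and suppose that for some 1 ≤ i < j ≤ m, (H_i/H_j)^{1/(j-i)} = H_0/H_1 (i.e. equality holds in the chain H_0/H_1 ≤ (H_i/H_j)^{1/(j-i)}). Then λ₁ = ⋯ = λ_m. -/

import Mathlib

open Finset

/-- The `k`-th elementary symmetric polynomial of `λ₁,…,λ_m`. -/
noncomputable def esymm (m k : ℕ) (lam : Fin m → ℝ) : ℝ :=
  ∑ s ∈ (Finset.univ : Finset (Fin m)).powersetCard k, ∏ i ∈ s, lam i

/-- The `k`-th elementary symmetric polynomial of the `m−1` variables with `λ_l` omitted. -/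
noncomputable def esymmOmit (m k : ℕ) (lam : Fin m → ℝ) (l : Fin m) : ℝ :=
  ∑ s ∈ ((Finset.univ : Finset (Fin m)).erase l).powersetCard k, ∏ i ∈ s, lam i

/-- Normalized `k`-th elementary symmetric function `H_k = σ_k / C(m,k)`. -/
noncomputable def Hk (m k : ℕ) (lam : Fin m → ℝ) : ℝ := esymm m k lam / (m.choose k)

/-- Normalized `k`-th elementary symmetric function of the tuple with `λ_l` omitted. -/
noncomputable def HkOmit (m k : ℕ) (lam : Fin m → ℝ) (l : Fin m) : ℝ :=
  esymmOmit m k lam l / ((m - 1).choose k)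

lemma esymm_pos {m k : ℕ} (hk : k ≤ m) {lam : Fin m → ℝ} (hpos : ∀ a, 0 < lam a) :
    0 < esymm m k lam := by
  apply Finset.sum_pos (fun s _ => Finset.prod_pos fun i _ => hpos i)
  exact Finset.powersetCard_nonempty.2 (by simpa using hk)

lemma esymm_nonneg {m k : ℕ} {lam : Fin m → ℝ} (hpos : ∀ a, 0 < lam a) :
    0 ≤ esymm m k lam :=
  Finset.sum_nonneg fun s _ => Finset.prod_nonneg fun i _ => (hpos i).le

lemma Hk_pos {m k : ℕ} (hk : k ≤ m) {lam : Fin m → ℝ} (hpos : ∀ a, 0 < lam a) :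
    0 < Hk m k lam :=
  div_pos (esymm_pos hk hpos) (by exact_mod_cast Nat.choose_pos hk)

lemma esymm_zero (m : ℕ) (lam : Fin m → ℝ) : esymm m 0 lam = 1 := by
  simp [esymm]

lemma Hk_zero (m : ℕ) (lam : Fin m → ℝ) : Hk m 0 lam = 1 := by
  simp [Hk, esymm_zero]

lemma esymm_one {m : ℕ} (lam : Fin m → ℝ) : esymm m 1 lam = ∑ a, lam a := by
  rw [esymm, Finset.powersetCard_one, Finset.sum_map]
  simp

lemma sq_sum_eq {α : Type*} [DecidableEq α] (s : Finset α) (x : α → ℝ) :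
    (∑ i ∈ s, x i) ^ 2 =
      ∑ i ∈ s, x i ^ 2 + 2 * ∑ t ∈ s.powersetCard 2, ∏ i ∈ t, x i := by
  induction s using Finset.induction_on with
  | empty =>
    rw [Finset.powersetCard_eq_empty.2 (by simp : (∅:Finset α).card < 2)]
    simp
  | insert _ _ h ih =>
    rename_i a s
    rw [Finset.sum_insert h, Finset.sum_insert h, Finset.powersetCard_succ_insert h,
      Finset.sum_union, Finset.sum_image, add_sq, ih]
    · rw [Finset.powersetCard_one, Finset.sum_map]
      simp only [Function.Embedding.coeFn_mk, Finset.prod_singleton]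
      have h2 : ∀ b ∈ s, ∏ i ∈ ({a, b} : Finset α), x i = x a * x b := by
        intro b hb
        exact Finset.prod_pair (fun hab => h (hab ▸ hb))
      rw [Finset.sum_congr rfl h2, ← Finset.mul_sum]
      show _ = _ + _ + 2 * (∑ t ∈ Finset.powersetCard 2 s, ∏ i ∈ t, x i + _)
      ring
    · intro t ht u hu htu
      rw [Finset.mem_coe, Finset.mem_powersetCard] at ht hu
      have hat : a ∉ t := fun hc => h (ht.1 hc)
      have hau : a ∉ u := fun hc => h (hu.1 hc)
      rw [← Finset.erase_insert hat, htu, Finset.erase_insert hau]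
    · rw [Finset.disjoint_right]
      rintro t ht hts
      simp only [Finset.mem_image] at ht
      obtain ⟨u, hu, rfl⟩ := ht
      rw [Finset.mem_powersetCard] at hts
      exact h (hts.1 (Finset.mem_insert_self a u))

lemma esymm_two {m : ℕ} (x : Fin m → ℝ) :
    2 * esymm m 2 x = (∑ a, x a) ^ 2 - ∑ a, x a ^ 2 := by
  rw [esymm, sq_sum_eq Finset.univ x]; ring

lemma newton_one {m : ℕ} (hm : 2 ≤ m) (x : Fin m → ℝ) :
    Hk m 0 x * Hk m 2 x ≤ Hk m 1 x ^ 2 := by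
  have hm' : (2 : ℝ) ≤ (m : ℝ) := by exact_mod_cast hm
  have key : (∑ a, x a) ^ 2 ≤ (m : ℝ) * ∑ a, x a ^ 2 := by
    simpa using sq_sum_le_card_mul_sum_sq (s := (Finset.univ : Finset (Fin m))) (f := x)
  have h2 : esymm m 2 x = ((∑ a, x a) ^ 2 - ∑ a, x a ^ 2) / 2 := by
    have := esymm_two x; linarith
  rw [Hk_zero, one_mul, Hk, Hk, h2, esymm_one, Nat.cast_choose_two, Nat.choose_one_right,
    div_pow]
  have hp : (0:ℝ) < (m:ℝ) * ((m:ℝ) - 1) / 2 := by nlinarith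
  rw [div_le_div_iff₀ hp (by positivity)]
  nlinarith [sq_nonneg (∑ a, x a)]

lemma rigid_one {m : ℕ} (hm : 2 ≤ m) (x : Fin m → ℝ)
    (h : Hk m 1 x ^ 2 = Hk m 0 x * Hk m 2 x) : ∀ a b : Fin m, x a = x b := by
  have hm' : (2 : ℝ) ≤ (m : ℝ) := by exact_mod_cast hm
  set S := ∑ a, x a with hS
  set Q := ∑ a, x a ^ 2 with hQ
  have h2 : esymm m 2 x = (S ^ 2 - Q) / 2 := by have := esymm_two x; linarith
  rw [Hk_zero, one_mul, Hk, Hk, h2, esymm_one, Nat.cast_choose_two, Nat.choose_one_right] at h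
  have hQS : (m : ℝ) * Q = S ^ 2 := by
    rw [div_pow] at h
    have E : S ^ 2 * ((m : ℝ) * ((m : ℝ) - 1) / 2) = (S ^ 2 - Q) / 2 * (m : ℝ) ^ 2 :=
      (div_eq_div_iff (by positivity) (by nlinarith)).1 h
    have E2 : (m : ℝ) * ((m : ℝ) * Q - S ^ 2) = 0 := by linear_combination 2 * E
    rcases mul_eq_zero.1 E2 with h' | h'
    · exfalso; nlinarith
    · linarith
  have hzero : ∑ a, ((m : ℝ) * x a - S) ^ 2 = 0 := by
    have expand : ∀ a : Fin m, ((m : ℝ) * x a - S) ^ 2 =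
        (m : ℝ) ^ 2 * x a ^ 2 - 2 * (m : ℝ) * S * x a + S ^ 2 := fun a => by ring
    rw [Finset.sum_congr rfl fun a _ => expand a]
    rw [Finset.sum_add_distrib, Finset.sum_sub_distrib, ← Finset.mul_sum, ← Finset.mul_sum,
      Finset.sum_const, Finset.card_univ, Fintype.card_fin, nsmul_eq_mul]
    rw [← hS, ← hQ]
    nlinarith [hQS]
  have hall : ∀ a : Fin m, (m : ℝ) * x a - S = 0 := by
    intro a
    have := (Finset.sum_eq_zero_iff_of_nonneg (fun b _ => sq_nonneg _)).1 hzero a (Finset.mem_univ a)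
    exact (pow_eq_zero_iff two_ne_zero).1 this
  intro a b
  have ha := hall a; have hb := hall b
  have hne : (m : ℝ) ≠ 0 := by positivity
  have : (m : ℝ) * x a = (m : ℝ) * x b := by linarith
  exact mul_left_cancel₀ hne this

lemma esymm_compl {m k : ℕ} (hk : k ≤ m) {lam : Fin m → ℝ} (hpos : ∀ a, 0 < lam a) :
    esymm m (m - k) lam = (∏ a, lam a) * esymm m k (fun a => (lam a)⁻¹) := by
  rw [esymm, esymm, Finset.mul_sum]
  refine Finset.sum_nbij' (i := fun s => sᶜ) (j := fun s => sᶜ) ?_ ?_ ?_ ?_ ?_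
  · intro s hs
    rw [Finset.mem_powersetCard_univ] at hs ⊢
    rw [Finset.card_compl, hs, Fintype.card_fin]
    omega
  · intro s hs
    rw [Finset.mem_powersetCard_univ] at hs ⊢
    rw [Finset.card_compl, hs, Fintype.card_fin]
  · intro s _; exact compl_compl s
  · intro s _; exact compl_compl s
  · intro s _
    have hsplit : ∏ a, lam a = (∏ i ∈ s, lam i) * ∏ i ∈ sᶜ, lam i :=
      (Finset.prod_mul_prod_compl s lam).symm
    show ∏ i ∈ s, lam i = (∏ a, lam a) * ∏ i ∈ sᶜ, (lam i)⁻¹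
    rw [hsplit, Finset.prod_inv_distrib, mul_assoc,
      mul_inv_cancel₀ (ne_of_gt (Finset.prod_pos fun i _ => hpos i)), mul_one]

lemma Hk_compl {m k : ℕ} (hk : k ≤ m) {lam : Fin m → ℝ} (hpos : ∀ a, 0 < lam a) :
    Hk m (m - k) lam = (∏ a, lam a) * Hk m k (fun a => (lam a)⁻¹) := by
  rw [Hk, Hk, esymm_compl hk hpos, Nat.choose_symm hk]
  ring

lemma newton_top {m : ℕ} (hm : 2 ≤ m) {lam : Fin m → ℝ} (hpos : ∀ a, 0 < lam a) :
    Hk m (m - 2) lam * Hk m m lam ≤ Hk m (m - 1) lam ^ 2 := by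
  set x : Fin m → ℝ := fun a => (lam a)⁻¹ with hx
  have hxpos : ∀ a, 0 < x a := fun a => inv_pos.2 (hpos a)
  have hP : 0 < ∏ a, lam a := Finset.prod_pos fun a _ => hpos a
  have h0 : Hk m m lam = (∏ a, lam a) * Hk m 0 x := by
    have := Hk_compl (k := 0) (Nat.zero_le m) hpos
    simpa using this
  have h1 : Hk m (m - 1) lam = (∏ a, lam a) * Hk m 1 x :=
    Hk_compl (by omega) hpos
  have h2 : Hk m (m - 2) lam = (∏ a, lam a) * Hk m 2 x :=
    Hk_compl hm hpos
  rw [h0, h1, h2]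
  have := newton_one hm x
  nlinarith [this, sq_nonneg (∏ a, lam a)]

open Polynomial in
lemma deriv_step {m : ℕ} (hm : 2 ≤ m) {lam : Fin m → ℝ} (hpos : ∀ a, 0 < lam a) :
    ∃ lam' : Fin (m - 1) → ℝ, (∀ a, 0 < lam' a) ∧
      ∀ k, k ≤ m - 1 → Hk (m - 1) k lam' = Hk m k lam := by
  classical
  set p : ℝ[X] := ∏ a, (X + C (lam a)) with hp
  have hmonic : p.Monic := monic_prod_of_monic _ _ fun a _ => monic_X_add_C (lam a)
  have hdeg : p.natDegree = m := by
    rw [hp, natDegree_prod_of_monic _ _ fun a _ => monic_X_add_C (lam a)]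
    simp [natDegree_X_add_C]
  have hcoeff : ∀ j, j ≤ m → p.coeff j = esymm m (m - j) lam := by
    intro j hj
    rw [esymm, hp]
    have := Finset.prod_X_add_C_coeff (Finset.univ : Finset (Fin m)) lam
      (by simpa using hj)
    simpa using this
  have hcoeff_nonneg : ∀ j, 0 ≤ p.coeff j := by
    intro j
    rcases le_or_gt j m with hj | hj
    · rw [hcoeff j hj]; exact esymm_nonneg hpos
    · rw [coeff_eq_zero_of_natDegree_lt (hdeg ▸ hj)]
  have hproots : p.roots = Finset.univ.val.map fun a => -(lam a) := by
    have : p = (((Finset.univ.val.map fun a => -(lam a))).map fun r => X - C r).prod := by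
      rw [hp, Multiset.map_map, Finset.prod]
      congr 1
      apply Multiset.map_congr rfl
      intro a _
      simp [sub_neg_eq_add]
    rw [this, roots_multiset_prod_X_sub_C]
  have hprootscard : Multiset.card p.roots = m := by
    rw [hproots, Multiset.card_map]; simp
  set q : ℝ[X] := derivative p with hq
  have hqcoeffm1 : q.coeff (m - 1) = m := by
    rw [hq, coeff_derivative]
    have h1 : m - 1 + 1 = m := by omega
    rw [h1]
    have : p.coeff m = 1 := by
      have := hmonic.coeff_natDegree
      rwa [hdeg] at this
    rw [this, one_mul]
    push_cast [show ((m - 1 : ℕ) : ℝ) = (m : ℝ) - 1 by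
      push_cast [Nat.cast_sub (by omega : 1 ≤ m)]; ring]
    ring
  have hqne : q ≠ 0 := fun h => by
    have : q.coeff (m - 1) = 0 := by rw [h]; simp
    rw [hqcoeffm1] at this
    exact (by positivity : (0:ℝ) < (m:ℝ)).ne' (by exact_mod_cast this)
  have hqdeg : q.natDegree = m - 1 := by
    refine le_antisymm (hdeg ▸ natDegree_derivative_le p) ?_
    exact le_natDegree_of_ne_zero (by rw [hqcoeffm1]; positivity)
  have hqcard : Multiset.card q.roots = m - 1 := by
    refine le_antisymm (hqdeg ▸ q.card_roots') ?_
    have := p.card_roots_le_derivative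
    rw [hprootscard, ← hq] at this
    omega
  have hqlead : q.leadingCoeff = m := by
    rw [Polynomial.leadingCoeff, hqdeg, hqcoeffm1]
  have hqfact : q = C (m : ℝ) * (q.roots.map fun a => X - C a).prod := by
    rw [← hqlead]
    exact (C_leadingCoeff_mul_prod_multiset_X_sub_C (hqdeg ▸ hqcard)).symm
  have hqcoeff_nonneg : ∀ j, 0 ≤ q.coeff j := by
    intro j
    rw [hq, coeff_derivative]
    have : (0:ℝ) ≤ (j : ℝ) + 1 := by positivity
    exact mul_nonneg (hcoeff_nonneg _) this
  have hqcoeff0 : 0 < q.coeff 0 := by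
    rw [hq, coeff_derivative, hcoeff 1 (by omega)]
    have := esymm_pos (k := m - 1) (by omega) hpos
    nlinarith
  have hrootsneg : ∀ μ ∈ q.roots, μ < 0 := by
    intro μ hμ
    by_contra hc
    push_neg at hc
    have hev : q.eval μ = 0 := (isRoot_of_mem_roots hμ)
    have : 0 < q.eval μ := by
      rw [eval_eq_sum_range]
      refine Finset.sum_pos' (fun j _ => mul_nonneg (hqcoeff_nonneg j) (by positivity)) ?_
      exact ⟨0, Finset.mem_range.2 (by omega), by simpa using hqcoeff0⟩
    linarith
  -- Step C: the new tuple
  set nus : Multiset ℝ := q.roots.map fun μ => -μ with hnus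
  have hnucard : Multiset.card nus = m - 1 := by rw [hnus, Multiset.card_map, hqcard]
  have hnupos : ∀ ν ∈ nus, 0 < ν := by
    intro ν hν
    rw [hnus, Multiset.mem_map] at hν
    obtain ⟨μ, hμ, rfl⟩ := hν
    linarith [hrootsneg μ hμ]
  set L : List ℝ := nus.toList with hLdef
  have hL : L.length = m - 1 := by rw [hLdef, Multiset.length_toList, hnucard]
  set lam' : Fin (m - 1) → ℝ := fun i => L.get (Fin.cast hL.symm i) with hlam'
  have hofn : List.ofFn lam' = L := by
    apply List.ext_get (by simp [hL])
    intro n h1 h2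
    simp [hlam']
  have hval : Finset.univ.val.map lam' = nus := by
    rw [Fin.univ_val_map, hofn, hLdef, Multiset.coe_toList]
  have hpos' : ∀ a, 0 < lam' a := by
    intro a
    apply hnupos
    rw [← hval]
    exact Multiset.mem_map_of_mem lam' (Finset.mem_univ_val _)
  have hesymm' : ∀ k, esymm (m - 1) k lam' = nus.esymm k := by
    intro k
    rw [esymm, ← Finset.esymm_map_val, hval]
  refine ⟨lam', hpos', ?_⟩
  intro k hk
  -- Step D: coefficient comparison
  have hqroots_eq : q.roots = nus.map fun ν => -ν := by
    rw [hnus, Multiset.map_map]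
    simp
  have hprod_eq : (q.roots.map fun a => X - C a) = nus.map fun ν => X + C ν := by
    rw [hqroots_eq, Multiset.map_map]
    apply Multiset.map_congr rfl
    intro ν _
    simp [sub_neg_eq_add]
  have hD : ((m - k : ℕ) : ℝ) * esymm m k lam = (m : ℝ) * esymm (m - 1) k lam' := by
    have lhs : q.coeff (m - 1 - k) = p.coeff (m - k) * ((m - k : ℕ) : ℝ) := by
      rw [hq, coeff_derivative]
      have h1 : m - 1 - k + 1 = m - k := by omega
      rw [h1]
      congr 1
      push_cast [Nat.cast_sub (show k ≤ m by omega),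
        Nat.cast_sub (show k ≤ m - 1 by omega), Nat.cast_sub (show 1 ≤ m by omega)]
      ring
    have rhs : q.coeff (m - 1 - k) = (m : ℝ) * nus.esymm k := by
      conv_lhs => rw [hqfact, hprod_eq]
      rw [coeff_C_mul]
      congr 1
      rw [Multiset.prod_X_add_C_coeff nus (by omega : m - 1 - k ≤ Multiset.card nus)]
      congr 1
      omega
    rw [hcoeff (m - k) (by omega), show m - (m - k) = k by omega] at lhs
    rw [← hesymm'] at rhs
    rw [lhs] at rhs
    linear_combination rhs
  -- Step E
  have hch : ((m - k : ℕ) : ℝ) * (m.choose k : ℝ) = (m : ℝ) * ((m - 1).choose k : ℝ) := by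
    have h1 : m * (m - 1).choose k = m.choose (k + 1) * (k + 1) := by
      have := Nat.add_one_mul_choose_eq (m - 1) k
      rwa [show m - 1 + 1 = m by omega] at this
    have h2 : m.choose (k + 1) * (k + 1) = m.choose k * (m - k) :=
      Nat.choose_succ_right_eq m k
    have : (m - k) * m.choose k = m * (m - 1).choose k := by
      rw [Nat.mul_comm, ← h2, ← h1]
    exact_mod_cast congrArg (Nat.cast : ℕ → ℝ) this
  rw [Hk, Hk, div_eq_div_iff
    (by exact_mod_cast Nat.choose_pos (show k ≤ m - 1 by omega) |>.ne')
    (by exact_mod_cast Nat.choose_pos (show k ≤ m by omega) |>.ne')]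
  apply mul_left_cancel₀ (show (m : ℝ) ≠ 0 by positivity)
  linear_combination esymm m k lam * hch - ((m.choose k : ℝ)) * hD

lemma newton : ∀ m : ℕ, ∀ lam : Fin m → ℝ, (∀ a, 0 < lam a) → ∀ k, 1 ≤ k → k + 1 ≤ m →
    Hk m (k - 1) lam * Hk m (k + 1) lam ≤ Hk m k lam ^ 2 := by
  intro m
  induction m using Nat.strong_induction_on with
  | _ m ih =>
    intro lam hpos k hk hkm
    rcases eq_or_lt_of_le hkm with he | hlt
    · have h1 : k - 1 = m - 2 := by omega
      have h2 : k = m - 1 := by omega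
      rw [h1, h2, show m - 1 + 1 = m from by omega]
      exact newton_top (by omega) hpos
    · obtain ⟨lam', hpos', hHk⟩ := deriv_step (by omega) hpos
      rw [← hHk (k - 1) (by omega), ← hHk k (by omega), ← hHk (k + 1) (by omega)]
      exact ih (m - 1) (by omega) lam' hpos' k hk (by omega)

lemma r_step {m : ℕ} {lam : Fin m → ℝ} (hpos : ∀ a, 0 < lam a) (k : ℕ) (h : k + 2 ≤ m) :
    Hk m k lam / Hk m (k + 1) lam ≤ Hk m (k + 1) lam / Hk m (k + 2) lam := by
  have hn := newton m lam hpos (k + 1) (by omega) (by omega)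
  simp only [Nat.add_sub_cancel] at hn
  rw [div_le_div_iff₀ (Hk_pos (by omega) hpos) (Hk_pos (by omega) hpos)]
  calc Hk m k lam * Hk m (k + 2) lam ≤ Hk m (k + 1) lam ^ 2 := by
        have : k + 1 + 1 = k + 2 := by omega
        rwa [this] at hn
    _ = Hk m (k + 1) lam * Hk m (k + 1) lam := sq (Hk m (k+1) lam) ▸ by ring

lemma r_mono {m : ℕ} {lam : Fin m → ℝ} (hpos : ∀ a, 0 < lam a) :
    ∀ t k, k + t + 1 ≤ m →
      Hk m k lam / Hk m (k + 1) lam ≤ Hk m (k + t) lam / Hk m (k + t + 1) lam := by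
  intro t
  induction t with
  | zero => intro k h; simp
  | succ t iht =>
    intro k h
    calc Hk m k lam / Hk m (k + 1) lam
        ≤ Hk m (k + t) lam / Hk m (k + t + 1) lam := iht k (by omega)
      _ ≤ Hk m (k + t + 1) lam / Hk m (k + t + 2) lam := r_step hpos (k + t) (by omega)
      _ = Hk m (k + (t + 1)) lam / Hk m (k + (t + 1) + 1) lam := by ring_nf

lemma chain1 {m : ℕ} {lam : Fin m → ℝ} (hpos : ∀ a, 0 < lam a) :
    ∀ t i, 1 ≤ i → i + t ≤ m →
      (Hk m 1 lam / Hk m 2 lam) ^ t ≤ Hk m i lam / Hk m (i + t) lam := by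
  intro t
  induction t with
  | zero =>
    intro i hi him
    rw [pow_zero, Nat.add_zero, div_self (Hk_pos (by omega) hpos).ne']
  | succ t iht =>
    intro i hi him
    have hb : Hk m (i + t) lam ≠ 0 := (Hk_pos (by omega) hpos).ne'
    have h1 : Hk m i lam / Hk m (i + (t + 1)) lam =
        (Hk m i lam / Hk m (i + t) lam) * (Hk m (i + t) lam / Hk m (i + t + 1) lam) := by
      rw [div_mul_div_comm, mul_comm (Hk m i lam), mul_div_mul_left _ _ hb,
        show i + (t + 1) = i + t + 1 from by omega]
    rw [h1, pow_succ]
    have hr : Hk m 1 lam / Hk m 2 lam ≤ Hk m (i + t) lam / Hk m (i + t + 1) lam := by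
      have := r_mono hpos (i + t - 1) 1 (by omega)
      rwa [show 1 + (i + t - 1) = i + t by omega] at this
    have hp1 : (0:ℝ) < Hk m 1 lam / Hk m 2 lam :=
      div_pos (Hk_pos (by omega) hpos) (Hk_pos (by omega) hpos)
    exact mul_le_mul (iht i hi (by omega)) hr hp1.le
      (le_of_lt (div_pos (Hk_pos (by omega) hpos) (Hk_pos (by omega) hpos)))

/-- Equality (H_i/H_j)^{1/(j-i)} = H₀/H₁ for positive λ forces all λ equal. -/
theorem rpow_ratio_equality_rigidity (m : ℕ) (hm : 2 ≤ m) (lam : Fin m → ℝ)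
    (hpos : ∀ a, 0 < lam a) (i j : ℕ) (hi : 1 ≤ i) (hij : i < j) (hjm : j ≤ m)
    (heq : (Hk m i lam / Hk m j lam) ^ ((1 : ℝ) / ((j : ℝ) - (i : ℝ))) =
      Hk m 0 lam / Hk m 1 lam) :
    ∀ a b : Fin m, lam a = lam b := by
  set d := j - i with hd
  have hd1 : 1 ≤ d := by omega
  have hdne : ((d : ℕ) : ℝ) ≠ 0 := (Nat.cast_pos.2 (by omega)).ne'
  have hcast : (j : ℝ) - (i : ℝ) = (d : ℝ) := by
    rw [hd, Nat.cast_sub hij.le]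
  rw [hcast] at heq
  set x := Hk m i lam / Hk m j lam with hx
  have hxpos : 0 < x := div_pos (Hk_pos (by omega) hpos) (Hk_pos hjm hpos)
  have hX : x = (Hk m 0 lam / Hk m 1 lam) ^ d := by
    have h2 := congrArg (fun y : ℝ => y ^ d) heq
    rwa [← Real.rpow_natCast (x ^ ((1 : ℝ) / (d : ℝ))) d, ← Real.rpow_mul hxpos.le,
      one_div_mul_cancel hdne, Real.rpow_one] at h2
  have hchain : (Hk m 1 lam / Hk m 2 lam) ^ d ≤ x := by
    have := chain1 hpos d i hi (by omega)
    rwa [show i + d = j from by omega] at this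
  have h01 : Hk m 0 lam / Hk m 1 lam ≤ Hk m 1 lam / Hk m 2 lam := by
    have := r_mono hpos 1 0 (by omega)
    simpa using this
  have hr0pos : 0 < Hk m 0 lam / Hk m 1 lam :=
    div_pos (Hk_pos (by omega) hpos) (Hk_pos (by omega) hpos)
  have hreq : Hk m 0 lam / Hk m 1 lam = Hk m 1 lam / Hk m 2 lam := by
    by_contra hne
    have hlt : Hk m 0 lam / Hk m 1 lam < Hk m 1 lam / Hk m 2 lam := lt_of_le_of_ne h01 hne
    have hpow := pow_lt_pow_left₀ hlt hr0pos.le (show d ≠ 0 by omega)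
    rw [← hX] at hpow
    linarith [hchain]
  have hsq : Hk m 1 lam ^ 2 = Hk m 0 lam * Hk m 2 lam := by
    have h1ne : Hk m 1 lam ≠ 0 := (Hk_pos (by omega) hpos).ne'
    have h2ne : Hk m 2 lam ≠ 0 := (Hk_pos hm hpos).ne'
    have h3 := (div_eq_div_iff h1ne h2ne).1 hreq
    rw [sq]; linarith [h3]
  exact rigid_one hm lam hsq
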